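/- Let A₁ and A₂ be Hermitian complex square matrices with A₁² = I and A₂² = I. Then for every matrix M of the appropriate size, (A₁⊗A₂)M + M(A₁⊗A₂) = (1/8)·Σ_{α₁,α₂∈{±1}} α₁α₂ [ ((I+α₁A₁)⊗(I+α₂A₂)) M ((I+α₁A₁)⊗(I+α₂A₂))† − ((I+iα₁A₁)⊗(I+iα₂A₂)) M ((I+iα₁A₁)⊗(I+iα₂A₂))† ]. -/
import Mathlib

open Matrix Kronecker

lemma kronCT {n m : ℕ} (A : Matrix (Fin n) (Fin n) ℂ) (B : Matrix (Fin m) (Fin m) ℂ) :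
    (A ⊗ₖ B)ᴴ = Aᴴ ⊗ₖ Bᴴ := by
  ext ⟨i,j⟩ ⟨k,l⟩
  simp [Matrix.conjTranspose_apply, mul_comm]

lemma kronExpand {n m : ℕ} (A₁ : Matrix (Fin n) (Fin n) ℂ) (A₂ : Matrix (Fin m) (Fin m) ℂ)
    (a b : ℂ) :
    (1 + a • A₁) ⊗ₖ (1 + b • A₂)
      = 1 + a • (A₁ ⊗ₖ 1) + b • ((1 : Matrix (Fin n) (Fin n) ℂ) ⊗ₖ A₂)
        + (a*b) • (A₁ ⊗ₖ A₂) := by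
  simp [Matrix.add_kronecker, Matrix.kronecker_add, Matrix.smul_kronecker,
    Matrix.kronecker_smul, Matrix.one_kronecker_one, smul_smul]
  module

theorem stmt_7 (n m : ℕ)
    (A₁ : Matrix (Fin n) (Fin n) ℂ) (A₂ : Matrix (Fin m) (Fin m) ℂ)
    (hA₁ : A₁ * A₁ = 1) (hA₂ : A₂ * A₂ = 1)
    (hH₁ : A₁.IsHermitian) (hH₂ : A₂.IsHermitian)
    (M : Matrix (Fin n × Fin m) (Fin n × Fin m) ℂ) :
    let T : Matrix (Fin n × Fin m) (Fin n × Fin m) ℂ := A₁ ⊗ₖ A₂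
    T * M + M * T =
      ((8 : ℂ))⁻¹ • ∑ α₁ ∈ ({1, -1} : Finset ℂ), ∑ α₂ ∈ ({1, -1} : Finset ℂ),
        (α₁ * α₂) •
          ((((1 + α₁ • A₁) ⊗ₖ (1 + α₂ • A₂)) * M *
              (((1 + α₁ • A₁) ⊗ₖ (1 + α₂ • A₂)))ᴴ) -
            (((1 + (Complex.I * α₁) • A₁) ⊗ₖ (1 + (Complex.I * α₂) • A₂)) * M *
              (((1 + (Complex.I * α₁) • A₁) ⊗ₖ (1 + (Complex.I * α₂) • A₂)))ᴴ)) := by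
  intro T
  have h1 : (1 : ℂ) ≠ -1 := by norm_num
  rw [Finset.sum_pair h1, Finset.sum_pair h1, Finset.sum_pair h1]
  simp only [kronExpand, conjTranspose_add, conjTranspose_smul, conjTranspose_one,
    kronCT, hH₁.eq, hH₂.eq]
  show A₁ ⊗ₖ A₂ * M + M * (A₁ ⊗ₖ A₂) = _
  set X := A₁ ⊗ₖ (1 : Matrix (Fin m) (Fin m) ℂ) with hX
  set Y := (1 : Matrix (Fin n) (Fin n) ℂ) ⊗ₖ A₂ with hY
  set Z := A₁ ⊗ₖ A₂ with hZ
  simp only [mul_add, add_mul, smul_mul_assoc, mul_smul_comm, smul_smul, smul_add,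
    smul_sub, sub_eq_add_neg, neg_add, mul_one, one_mul, mul_assoc, neg_smul, smul_neg,
    neg_mul, mul_neg, one_smul, neg_neg]
  simp only [Complex.star_def, _root_.map_mul, _root_.map_one, _root_.map_neg, Complex.conj_I]
  match_scalars <;> ring_nf <;> simp [Complex.I_sq] <;> try ring
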